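/- Suppose that for every ε > 0 there exists a constant k_ε > 0 such that for all n > 2, ( ∏ over coprime pairs (x,y), x+y=n, x<y, of rad(x·y·n) )^(2/φ(n)) > k_ε · rad(n)^(1-ε) · n². Then for every θ > 0 there exists a constant K_θ > 0 such that for all n > 2, ( ∏ over 1 ≤ m < n with gcd(m,n)=1 of rad(m) )^(1/φ(n)) > K_θ · rad(n)^(-θ) · n. -/

import Mathlib

def rad (m : ℕ) : ℕ := ∏ p ∈ m.primeFactors, p

lemma rad_pos (m : ℕ) : 0 < rad m :=
  Finset.prod_pos fun p hp => (Nat.prime_of_mem_primeFactors hp).pos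

lemma prod_union_dvd (s t : Finset ℕ) (f : ℕ → ℕ) :
    ∏ p ∈ s ∪ t, f p ∣ (∏ p ∈ s, f p) * ∏ p ∈ t, f p := by
  rw [← Finset.union_sdiff_self_eq_union, Finset.prod_union Finset.disjoint_sdiff]
  exact mul_dvd_mul_left _ (Finset.prod_dvd_prod_of_subset _ _ _ Finset.sdiff_subset)

lemma rad_mul_dvd {a b : ℕ} (ha : a ≠ 0) (hb : b ≠ 0) : rad (a * b) ∣ rad a * rad b := by
  unfold rad
  rw [Nat.primeFactors_mul ha hb]
  exact prod_union_dvd _ _ _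

theorem stmt5
    (h : ∀ ε : ℝ, 0 < ε → ∃ k : ℝ, 0 < k ∧ ∀ n : ℕ, 2 < n →
      ((∏ p ∈ ((Finset.range n) ×ˢ (Finset.range n)).filter
        (fun p => p.1 + p.2 = n ∧ 0 < p.1 ∧ p.1 < p.2 ∧ Nat.gcd p.1 p.2 = 1),
          (rad (p.1 * p.2 * n) : ℝ)) ^ ((2 : ℝ) / Nat.totient n))
        > k * (rad n : ℝ) ^ ((1 : ℝ) - ε) * (n : ℝ) ^ 2) :
    ∀ θ : ℝ, 0 < θ → ∃ K : ℝ, 0 < K ∧ ∀ n : ℕ, 2 < n →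
      ((∏ m ∈ (Finset.Ico 1 n).filter (fun m => Nat.gcd m n = 1),
        (rad m : ℝ)) ^ ((1 : ℝ) / Nat.totient n))
        > K * (rad n : ℝ) ^ (-θ) * n := by
  intro θ hθ
  obtain ⟨k, hk, hkall⟩ := h (2 * θ) (by positivity)
  refine ⟨k ^ ((1 : ℝ) / 2), Real.rpow_pos_of_pos hk _, ?_⟩
  intro n hn
  have hn0 : (0 : ℕ) < n := by omega
  set T := (Finset.Ico 1 n).filter (fun m => Nat.gcd m n = 1) with hT
  set S := ((Finset.range n) ×ˢ (Finset.range n)).filter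
      (fun p => p.1 + p.2 = n ∧ 0 < p.1 ∧ p.1 < p.2 ∧ Nat.gcd p.1 p.2 = 1) with hS
  set A := (Finset.Ico 1 n).filter (fun m => Nat.gcd m n = 1 ∧ 2 * m < n) with hA
  -- auxiliary: no m with gcd m n = 1 and 2*m = n
  have hne : ∀ m : ℕ, Nat.gcd m n = 1 → 2 * m ≠ n := by
    intro m hg he
    have : Nat.gcd m n = m := by rw [← he]; simp [Nat.gcd_mul_right, Nat.gcd_comm]
    omega
  have hgcd_sub : ∀ m : ℕ, m < n → Nat.gcd (n - m) n = Nat.gcd m n :=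
    fun m hm => Nat.gcd_self_sub_left hm.le
  -- T.filter (2m < n) = A
  have hfA : T.filter (fun m => 2 * m < n) = A := by
    ext m
    simp only [hT, hA, Finset.mem_filter, Finset.mem_Ico]
    tauto
  -- T.filter (¬ 2m < n) = A.image (n - ·)
  have hImg : T.filter (fun m => ¬ 2 * m < n) = A.image (fun m => n - m) := by
    ext x
    simp only [hT, hA, Finset.mem_filter, Finset.mem_Ico, Finset.mem_image, not_lt]
    constructor
    · rintro ⟨⟨⟨hx1, hxn⟩, hg⟩, hge⟩
      have h2 : n < 2 * x := lt_of_le_of_ne (hge) (fun he => hne x hg he.symm)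
      refine ⟨n - x, ⟨⟨by omega, by omega⟩, by rw [hgcd_sub x hxn]; exact hg, by omega⟩, by omega⟩
    · rintro ⟨m, ⟨⟨hm1, hmn⟩, hg, h2m⟩, rfl⟩
      refine ⟨⟨⟨by omega, by omega⟩, by rw [hgcd_sub m hmn]; exact hg⟩, by omega⟩
  have hinj : Set.InjOn (fun m => n - m) A := by
    intro a ha b hb hab
    simp only [hA, Finset.coe_filter, Set.mem_setOf_eq, Finset.mem_Ico] at ha hb
    simp only at hab
    omega
  -- cardinality : totient n = 2 * A.card
  have hTcard : T.card = n.totient := by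
    rw [Nat.totient]
    congr 1
    ext m
    simp only [hT, Finset.mem_filter, Finset.mem_Ico, Finset.mem_range, Nat.Coprime]
    constructor
    · rintro ⟨⟨h1, h2⟩, hg⟩; exact ⟨h2, by rw [Nat.gcd_comm]; exact hg⟩
    · rintro ⟨h2, hg⟩
      have : m ≠ 0 := by rintro rfl; simp at hg; omega
      exact ⟨⟨by omega, h2⟩, by rw [Nat.gcd_comm]; exact hg⟩
  have hcard : n.totient = 2 * A.card := by
    rw [← hTcard, ← Finset.card_filter_add_card_filter_not (s := T)
      (p := fun m => 2 * m < n), hfA, hImg, Finset.card_image_of_injOn hinj]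
    omega
  -- product over T
  have hprodT : ∏ m ∈ T, rad m = ∏ m ∈ A, (rad m * rad (n - m)) := by
    rw [← Finset.prod_filter_mul_prod_filter_not T (fun m => 2 * m < n), hfA, hImg,
      Finset.prod_image hinj, ← Finset.prod_mul_distrib]
  -- product over S of rad p.1 * rad p.2 * rad n
  have hprodS : ∏ p ∈ S, (rad p.1 * rad p.2 * rad n) = ∏ m ∈ A, (rad m * rad (n - m) * rad n) := by
    refine Finset.prod_bij' (fun p _ => p.1) (fun m _ => (m, n - m)) ?_ ?_ ?_ ?_ ?_
    · intro p hp
      simp only [hS, Finset.mem_filter, Finset.mem_product, Finset.mem_range] at hp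
      obtain ⟨⟨h1, h2⟩, hsum, hp1, hlt, hg⟩ := hp
      simp only [hA, Finset.mem_filter, Finset.mem_Ico]
      refine ⟨⟨by omega, by omega⟩, ?_, by omega⟩
      have : p.2 = n - p.1 := by omega
      rw [← Nat.gcd_sub_self_right (by omega : p.1 ≤ n), ← this]
      exact hg
    · intro m hm
      simp only [hA, Finset.mem_filter, Finset.mem_Ico] at hm
      obtain ⟨⟨h1, h2⟩, hg, h2m⟩ := hm
      simp only [hS, Finset.mem_filter, Finset.mem_product, Finset.mem_range]
      refine ⟨⟨by omega, by omega⟩, by omega, by omega, by omega, ?_⟩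
      rw [Nat.gcd_sub_self_right h2.le]
      exact hg
    · intro p hp
      simp only [hS, Finset.mem_filter, Finset.mem_product, Finset.mem_range] at hp
      obtain ⟨_, hsum, _, _, _⟩ := hp
      ext <;> simp <;> omega
    · intro m hm; rfl
    · intro p hp
      simp only [hS, Finset.mem_filter, Finset.mem_product, Finset.mem_range] at hp
      obtain ⟨_, hsum, _, _, _⟩ := hp
      have : p.2 = n - p.1 := by omega
      rw [this]
  -- divisibility
  have hdvd : (∏ p ∈ S, rad (p.1 * p.2 * n)) ∣ (∏ m ∈ T, rad m) * rad n ^ A.card := by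
    have h1 : (∏ p ∈ S, rad (p.1 * p.2 * n)) ∣ ∏ p ∈ S, (rad p.1 * rad p.2 * rad n) := by
      refine Finset.prod_dvd_prod_of_dvd _ _ ?_
      intro p hp
      simp only [hS, Finset.mem_filter, Finset.mem_product, Finset.mem_range] at hp
      obtain ⟨_, hsum, hp1, hlt, _⟩ := hp
      exact dvd_trans (rad_mul_dvd (Nat.mul_ne_zero (by omega) (by omega)) (by omega))
        (mul_dvd_mul_right (rad_mul_dvd (by omega) (by omega)) _)
    calc (∏ p ∈ S, rad (p.1 * p.2 * n)) ∣ ∏ p ∈ S, (rad p.1 * rad p.2 * rad n) := h1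
      _ = ∏ m ∈ A, (rad m * rad (n - m) * rad n) := hprodS
      _ = (∏ m ∈ A, (rad m * rad (n - m))) * rad n ^ A.card := by
          rw [Finset.prod_mul_distrib, Finset.prod_const]
      _ = (∏ m ∈ T, rad m) * rad n ^ A.card := by rw [hprodT]
  have hle : (∏ p ∈ S, rad (p.1 * p.2 * n)) ≤ (∏ m ∈ T, rad m) * rad n ^ A.card :=
    Nat.le_of_dvd (Nat.mul_pos (Finset.prod_pos fun m _ => rad_pos m) (pow_pos (rad_pos n) _)) hdvd
  -- real part
  set c := A.card with hc
  have htot : 0 < n.totient := Nat.totient_pos.mpr hn0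
  have hc0 : 0 < c := by omega
  have hφ : (0:ℝ) < (n.totient : ℝ) := by exact_mod_cast htot
  have hQ := hkall n hn
  rw [← hS] at hQ
  set P : ℝ := ∏ m ∈ T, (rad m : ℝ) with hP
  have hP0 : 0 < P := Finset.prod_pos fun m _ => by exact_mod_cast rad_pos m
  set R : ℝ := (rad n : ℝ) with hR
  have hR0 : (0:ℝ) < R := by rw [hR]; exact_mod_cast rad_pos n
  set Q : ℝ := ∏ p ∈ S, (rad (p.1 * p.2 * n) : ℝ) with hQdef
  have hQ0 : 0 ≤ Q := Finset.prod_nonneg fun p _ => by positivity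
  have hQle : Q ≤ P * R ^ c := by
    rw [hQdef, hP, hR]
    exact_mod_cast hle
  have key : Q ^ ((2:ℝ)/(n.totient:ℝ)) ≤ (P * R ^ c) ^ ((2:ℝ)/(n.totient:ℝ)) :=
    Real.rpow_le_rpow hQ0 hQle (by positivity)
  have hcr : ((c:ℝ)) ≠ 0 := Nat.cast_ne_zero.mpr hc0.ne'
  have hPR : (P * R ^ c) ^ ((2:ℝ)/(n.totient:ℝ)) = P ^ ((2:ℝ)/(n.totient:ℝ)) * R := by
    rw [Real.mul_rpow hP0.le (by positivity), ← Real.rpow_natCast R c,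
      ← Real.rpow_mul hR0.le]
    congr 1
    have hone : (c:ℝ) * ((2:ℝ) / (n.totient:ℝ)) = 1 := by
      rw [hcard]
      push_cast
      field_simp
    rw [hone, Real.rpow_one]
  have hmain : k * R ^ (-(2*θ)) * (n:ℝ) ^ 2 < P ^ ((2:ℝ)/(n.totient:ℝ)) := by
    have hgt : k * R ^ ((1:ℝ) - 2*θ) * (n:ℝ) ^ 2 < P ^ ((2:ℝ)/(n.totient:ℝ)) * R :=
      lt_of_lt_of_le hQ (key.trans_eq hPR)
    have heq : k * R ^ ((1:ℝ) - 2*θ) * (n:ℝ) ^ 2 = (k * R ^ (-(2*θ)) * (n:ℝ)^2) * R := by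
      rw [show (1:ℝ) - 2*θ = -(2*θ) + 1 by ring, Real.rpow_add hR0, Real.rpow_one]
      ring
    rw [heq] at hgt
    exact (mul_lt_mul_iff_of_pos_right hR0).mp hgt
  have hstep := Real.rpow_lt_rpow (by positivity) hmain (by norm_num : (0:ℝ) < 1/2)
  have hL : (k * R ^ (-(2*θ)) * (n:ℝ)^2) ^ ((1:ℝ)/2) = k ^ ((1:ℝ)/2) * R ^ (-θ) * n := by
    rw [Real.mul_rpow (by positivity) (by positivity), Real.mul_rpow hk.le (by positivity),
      ← Real.rpow_natCast (n:ℝ) 2,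
      ← Real.rpow_mul (Nat.cast_nonneg n) (((2:ℕ):ℝ)) ((1:ℝ)/2),
      ← Real.rpow_mul hR0.le (-(2*θ)) ((1:ℝ)/2),
      show -(2*θ) * ((1:ℝ)/2) = -θ by ring,
      show ((2:ℕ):ℝ) * ((1:ℝ)/2) = 1 by norm_num, Real.rpow_one]
  have hRt : (P ^ ((2:ℝ)/(n.totient:ℝ))) ^ ((1:ℝ)/2) = P ^ ((1:ℝ)/(n.totient:ℝ)) := by
    rw [← Real.rpow_mul hP0.le]
    congr 1
    ring
  rw [hL, hRt] at hstep
  exact hstep
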